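/- Let K be a proper cone in ℝ^n and let A be a K-primitive matrix whose minimal polynomial has degree m_A = 2. Then γ(A) = 1 or γ(A) = 2. -/

import Mathlib

open Matrix Set Real

noncomputable section

/-- A proper cone in `ℝ^n`: a closed convex cone that is pointed and full. -/
def IsProperCone {n : ℕ} (K : Set (Fin n → ℝ)) : Prop :=
  IsClosed K ∧ (∀ x ∈ K, ∀ y ∈ K, x + y ∈ K) ∧
    (∀ (c : ℝ), 0 ≤ c → ∀ x ∈ K, c • x ∈ K) ∧
    K ∩ (-K) = {0} ∧ (interior K).Nonempty

/-- The positive hull (cone generated by) finitely many vectors. -/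
def ConeGen {n m : ℕ} (y : Fin m → Fin n → ℝ) : Set (Fin n → ℝ) :=
  {x | ∃ c : Fin m → ℝ, (∀ j, 0 ≤ c j) ∧ x = ∑ j, c j • y j}

/-- A polyhedral cone: a proper cone that is the positive hull of finitely many vectors. -/
def IsPolyhedralCone {n : ℕ} (K : Set (Fin n → ℝ)) : Prop :=
  IsProperCone K ∧ ∃ (m : ℕ) (y : Fin m → Fin n → ℝ), K = ConeGen y

/-- `A` is `K`-nonnegative: `A K ⊆ K`. -/
def KNonneg {n : ℕ} (K : Set (Fin n → ℝ)) (A : Matrix (Fin n) (Fin n) ℝ) : Prop :=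
  ∀ x ∈ K, A.mulVec x ∈ K

/-- `A` is `K`-positive: `A` maps `K \ {0}` into the interior of `K`. -/
def KPositive {n : ℕ} (K : Set (Fin n → ℝ)) (A : Matrix (Fin n) (Fin n) ℝ) : Prop :=
  ∀ x ∈ K, x ≠ 0 → A.mulVec x ∈ interior K

/-- `A` is `K`-primitive: `A` is `K`-nonnegative and some power of `A` is `K`-positive. -/
def KPrimitive {n : ℕ} (K : Set (Fin n → ℝ)) (A : Matrix (Fin n) (Fin n) ℝ) : Prop :=
  KNonneg K A ∧ ∃ k : ℕ, 0 < k ∧ KPositive K (A ^ k)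

/-- The exponent `γ(A)` of a `K`-primitive matrix: the least `k ≥ 1` with `A^k` `K`-positive. -/
def expnt {n : ℕ} (K : Set (Fin n → ℝ)) (A : Matrix (Fin n) (Fin n) ℝ) : ℕ :=
  sInf {k : ℕ | 0 < k ∧ KPositive K (A ^ k)}

/-- `x` is an extreme vector of `K`. -/
def IsExtremeVec {n : ℕ} (K : Set (Fin n → ℝ)) (x : Fin n → ℝ) : Prop :=
  x ∈ K ∧ x ≠ 0 ∧ ∀ y ∈ K, ∀ z ∈ K, x = y + z →
    (∃ a : ℝ, 0 ≤ a ∧ y = a • x) ∧ (∃ b : ℝ, 0 ≤ b ∧ z = b • x)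

/-- The set of extreme rays of `K`. -/
def ExtremeRays {n : ℕ} (K : Set (Fin n → ℝ)) : Set (Set (Fin n → ℝ)) :=
  {R | ∃ x, IsExtremeVec K x ∧ R = {y | ∃ c : ℝ, 0 ≤ c ∧ y = c • x}}

/-- `K ∈ P(m,n)`: an `n`-dimensional polyhedral cone in `ℝ^n` with exactly `m` extreme rays.
(A proper cone in `ℝ^n` has nonempty interior, hence is automatically `n`-dimensional.) -/
def MemP {n : ℕ} (m : ℕ) (K : Set (Fin n → ℝ)) : Prop :=
  IsPolyhedralCone K ∧ (ExtremeRays K).ncard = m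

/-- A face of a cone `K`. -/
def IsFace {n : ℕ} (K F : Set (Fin n → ℝ)) : Prop :=
  0 ∈ F ∧ F ⊆ K ∧ (∀ x ∈ F, ∀ y ∈ F, x + y ∈ F) ∧
    (∀ (c : ℝ), 0 ≤ c → ∀ x ∈ F, c • x ∈ F) ∧
    ∀ x ∈ F, ∀ y ∈ K, x - y ∈ K → y ∈ F

/-- `A` is `K`-irreducible: `A` is `K`-nonnegative and leaves invariant no nontrivial face. -/
def KIrreducible {n : ℕ} (K : Set (Fin n → ℝ)) (A : Matrix (Fin n) (Fin n) ℝ) : Prop :=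
  KNonneg K A ∧ ∀ F : Set (Fin n → ℝ), IsFace K F → (∀ x ∈ F, A.mulVec x ∈ F) →
    F = ({0} : Set (Fin n → ℝ)) ∨ F = K

section AuxiliaryLemmas
open Pointwise

-- basic cone facts
section basics

variable {n : ℕ} {K : Set (Fin n → ℝ)}

theorem pointed_zero_of_mem_neg (hKpt : K ∩ (-K) = {0}) {z : Fin n → ℝ}
    (hz : z ∈ K) (hz' : -z ∈ K) : z = 0 := by
  have : z ∈ K ∩ (-K) := ⟨hz, by simpa [Set.mem_neg] using hz'⟩
  rw [hKpt] at this
  simpa using this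

theorem interior_add_mem (hKadd : ∀ x ∈ K, ∀ y ∈ K, x + y ∈ K)
    {z w : Fin n → ℝ} (hz : z ∈ interior K) (hw : w ∈ K) : z + w ∈ interior K := by
  have hO : IsOpen (interior K + ({w} : Set (Fin n → ℝ))) := isOpen_interior.add_right
  have hsub : interior K + ({w} : Set (Fin n → ℝ)) ⊆ K := by
    rintro v ⟨a, ha, b, hb, rfl⟩
    rcases hb with rfl
    exact hKadd a (interior_subset ha) _ hw
  exact interior_maximal hsub hO ⟨z, hz, w, rfl, rfl⟩

theorem interior_smul_mem (hKsmul : ∀ (c : ℝ), 0 ≤ c → ∀ x ∈ K, c • x ∈ K)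
    {c : ℝ} (hc : 0 < c) {z : Fin n → ℝ} (hz : z ∈ interior K) : c • z ∈ interior K := by
  have hO : IsOpen (c • interior K) := isOpen_interior.smul₀ (ne_of_gt hc)
  have hsub : c • interior K ⊆ K := by
    rintro v ⟨a, ha, rfl⟩
    exact hKsmul c hc.le a (interior_subset ha)
  exact interior_maximal hsub hO ⟨z, hz, rfl⟩

end basics


/-- A closed pointed convex cone admits a continuous linear functional which is
uniformly positive on it. -/
theorem exists_posfun {n : ℕ} (C : Set (Fin n → ℝ)) (hCclosed : IsClosed C)
    (hCsmul : ∀ (c : ℝ), 0 ≤ c → ∀ z ∈ C, c • z ∈ C) (hCconv : Convex ℝ C)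
    (h0C : (0 : Fin n → ℝ) ∈ C) (hpt : ∀ z ∈ C, -z ∈ C → z = 0) :
    ∃ (g : (Fin n → ℝ) →L[ℝ] ℝ) (m : ℝ), 0 < m ∧ (∀ w ∈ C, 0 ≤ g w) ∧
      (∀ w ∈ C, m * ‖w‖ ≤ g w) := by
  set S : Set (Fin n → ℝ) := C ∩ Metric.sphere 0 1 with hS
  by_cases hSne : S.Nonempty
  swap
  · refine ⟨0, 1, one_pos, by simp, ?_⟩
    intro w hw
    by_cases hw0 : w = 0
    · simp [hw0]
    · exfalso
      apply hSne
      have hnw : (0:ℝ) < ‖w‖ := norm_pos_iff.2 hw0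
      refine ⟨‖w‖⁻¹ • w, hCsmul _ (inv_nonneg.2 hnw.le) w hw, ?_⟩
      rw [mem_sphere_zero_iff_norm, norm_smul]
      simp [abs_of_pos (inv_pos.2 hnw), inv_mul_cancel₀ hnw.ne']
  · have hScpt : IsCompact S :=
      (isCompact_sphere (0 : Fin n → ℝ) 1).of_isClosed_subset
        (hCclosed.inter Metric.isClosed_sphere) inter_subset_right
    have hsep : ∀ z : S, ∃ f : (Fin n → ℝ) →L[ℝ] ℝ, (∀ w ∈ C, 0 ≤ f w) ∧ 0 < f z := by
      rintro ⟨z, hzC, hzs⟩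
      have hz1 : ‖z‖ = 1 := by simpa using hzs
      have hz0 : z ≠ 0 := by intro h; rw [h] at hz1; simp at hz1
      have hznot : z ∉ -C := by
        intro h
        rw [Set.mem_neg] at h
        exact hz0 (hpt z hzC h)
      obtain ⟨f, u0, hfu, hzu⟩ := geometric_hahn_banach_closed_point
        (hCconv.neg) (hCclosed.neg) hznot
      have h0negC : (0 : Fin n → ℝ) ∈ -C := by rw [Set.mem_neg]; simpa using h0C
      have hu0 : 0 < u0 := by
        have := hfu 0 h0negC
        simpa using this
      have hnonneg : ∀ w ∈ C, 0 ≤ f w := by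
        intro w hw
        by_contra hneg
        push_neg at hneg
        set cc : ℝ := (u0 + 1) / (-(f w)) with hcc
        have hccpos : 0 < cc := by
          apply div_pos (by linarith) (by linarith)
        have h1 : -(cc • w) ∈ -C := by
          rw [Set.mem_neg, neg_neg]
          exact hCsmul cc hccpos.le w hw
        have h2 := hfu _ h1
        have h3 : f (-(cc • w)) = cc * (-(f w)) := by
          rw [_root_.map_neg, _root_.map_smul]; simp only [smul_eq_mul]; ring
        rw [h3, hcc] at h2
        rw [div_mul_cancel₀] at h2
        · linarith
        · linarith
      exact ⟨f, hnonneg, lt_trans hu0 hzu⟩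
    choose F hF1 hF2 using hsep
    have hcover : S ⊆ ⋃ z : S, {w : Fin n → ℝ | 0 < F z w} :=
      fun w hw => Set.mem_iUnion.2 ⟨⟨w, hw⟩, hF2 ⟨w, hw⟩⟩
    obtain ⟨tf, htf⟩ := hScpt.elim_finite_subcover (fun z : S => {w : Fin n → ℝ | 0 < F z w})
      (fun z => isOpen_lt continuous_const (F z).continuous) hcover
    set g : (Fin n → ℝ) →L[ℝ] ℝ := ∑ i ∈ tf, F i with hg
    have hg_apply : ∀ w, g w = ∑ i ∈ tf, F i w := by
      intro w
      rw [hg]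
      simp
    have hg0 : ∀ w ∈ C, 0 ≤ g w := by
      intro w hw
      rw [hg_apply]
      exact Finset.sum_nonneg fun i _ => hF1 i w hw
    have hgsmul : ∀ (cc : ℝ) (w : Fin n → ℝ), g (cc • w) = cc * g w := by
      intro cc w
      rw [_root_.map_smul]; simp [smul_eq_mul]
    have hgposS : ∀ w ∈ S, 0 < g w := by
      intro w hwS
      obtain ⟨i, hi, hlt⟩ := Set.mem_iUnion₂.1 (htf hwS)
      rw [hg_apply]
      exact Finset.sum_pos' (fun j _ => hF1 j w hwS.1) ⟨i, hi, hlt⟩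
    obtain ⟨zm, hzmS, hzm⟩ := hScpt.exists_isMinOn hSne g.continuous.continuousOn
    set m : ℝ := g zm with hm_def
    have hm : 0 < m := hgposS zm hzmS
    refine ⟨g, m, hm, hg0, ?_⟩
    intro w hw
    by_cases hw0 : w = 0
    · subst hw0; simp
    · have hnw : (0:ℝ) < ‖w‖ := norm_pos_iff.2 hw0
      set w' := ‖w‖⁻¹ • w with hw'
      have hw'C : w' ∈ C := hCsmul _ (inv_nonneg.2 hnw.le) w hw
      have hw'S : w' ∈ S := by
        refine ⟨hw'C, ?_⟩
        rw [mem_sphere_zero_iff_norm, hw', norm_smul]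
        simp [abs_of_pos (inv_pos.2 hnw), inv_mul_cancel₀ hnw.ne']
      have h1 : m ≤ g w' := hzm hw'S
      have h2 : g w' = ‖w‖⁻¹ * g w := by rw [hw', hgsmul]
      rw [h2] at h1
      calc m * ‖w‖ = ‖w‖ * m := mul_comm _ _
        _ ≤ ‖w‖ * (‖w‖⁻¹ * g w) := mul_le_mul_of_nonneg_left h1 hnw.le
        _ = g w := by field_simp

set_option maxHeartbeats 4000000 in
theorem KPositive_sq {n : ℕ} (K : Set (Fin n → ℝ)) (A : Matrix (Fin n) (Fin n) ℝ)
    (hK : IsProperCone K) (hA : KPrimitive K A) (hdeg : (minpoly ℝ A).natDegree = 2) :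
    KPositive K (A ^ 2) := by
  obtain ⟨hKcl, hKadd, hKsmul, hKpt, hKint⟩ := hK
  obtain ⟨hAnn, k, hk0, hkpos⟩ := hA
  -- n ≥ 1
  have hn : 0 < n := by
    by_contra h
    have hn0 : n = 0 := by omega
    subst hn0
    have hone : (1 : Matrix (Fin 0) (Fin 0) ℝ) = 0 := by
      ext i j; exact i.elim0
    have hmin := minpoly.min (A := ℝ) A Polynomial.monic_one
      (by rw [_root_.map_one, hone])
    have h1 : (minpoly ℝ A).degree ≤ 0 := by
      simpa [Polynomial.degree_one] using hmin
    have h2 : (minpoly ℝ A).natDegree ≤ 0 := Polynomial.natDegree_le_iff_degree_le.mpr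
      (by exact_mod_cast h1)
    omega
  -- 0 ∈ K
  have h0K : (0 : Fin n → ℝ) ∈ K := by
    obtain ⟨e, he⟩ := hKint
    simpa using hKsmul 0 le_rfl e (interior_subset he)
  -- 0 ∉ interior K
  have h0int : (0 : Fin n → ℝ) ∉ interior K := by
    intro h
    rw [mem_interior_iff_mem_nhds, Metric.mem_nhds_iff] at h
    obtain ⟨ε, hε, hball⟩ := h
    set w : Fin n → ℝ := fun _ => ε / 2 with hw
    have hwb : ∀ v : Fin n → ℝ, ‖v‖ ≤ ε / 2 → v ∈ K := by
      intro v hv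
      apply hball
      simp only [Metric.mem_ball, dist_zero_right]
      linarith
    have hwn : ‖w‖ ≤ ε / 2 := by
      apply pi_norm_le_iff_of_nonneg (by linarith) |>.2
      intro i
      rw [hw]
      simp only [Real.norm_eq_abs]
      rw [abs_of_nonneg (by positivity)]
    have hw1 : w ∈ K := hwb w hwn
    have hw2 : -w ∈ K := hwb (-w) (by simpa using hwn)
    have := pointed_zero_of_mem_neg hKpt hw1 hw2
    have := congrFun this ⟨0, hn⟩
    simp [hw] at this
    linarith
  -- minimal polynomial relation
  have hIntA : IsIntegral ℝ A := Algebra.IsIntegral.isIntegral A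
  set α : ℝ := -((minpoly ℝ A).coeff 1) with hα
  set β : ℝ := -((minpoly ℝ A).coeff 0) with hβ
  have hA2 : A ^ 2 = α • A + β • (1 : Matrix (Fin n) (Fin n) ℝ) := by
    have hp3 : (Polynomial.aeval A) (minpoly ℝ A) = 0 := minpoly.aeval ℝ A
    rw [Polynomial.aeval_eq_sum_range, hdeg] at hp3
    have hc2 : (minpoly ℝ A).coeff 2 = 1 := by
      have := (minpoly.monic hIntA).coeff_natDegree
      rwa [hdeg] at this
    rw [Finset.sum_range_succ, Finset.sum_range_succ, Finset.sum_range_one] at hp3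
    rw [hc2, one_smul, pow_zero, pow_one] at hp3
    have h2 : A ^ 2 + ((minpoly ℝ A).coeff 1 • A + (minpoly ℝ A).coeff 0 •
        (1 : Matrix (Fin n) (Fin n) ℝ)) = 0 := by
      rw [← hp3]; abel
    have h3 := eq_neg_of_add_eq_zero_left h2
    rw [h3, hα, hβ, neg_add, neg_smul, neg_smul]
  have hACT : ∀ z : Fin n → ℝ, A.mulVec (A.mulVec z) = α • A.mulVec z + β • z := by
    intro z
    rw [mulVec_mulVec, ← pow_two, hA2, add_mulVec, smul_mulVec, smul_mulVec,
      one_mulVec]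
  -- powers preserve K
  have hpowK : ∀ (j : ℕ), ∀ z ∈ K, (A ^ j).mulVec z ∈ K := by
    intro j
    induction j with
    | zero => intro z hz; simpa [one_mulVec] using hz
    | succ j ih =>
      intro z hz
      rw [pow_succ', ← mulVec_mulVec]
      exact hAnn _ (ih z hz)
  intro x hx hx0
  by_cases hdep : ∃ μ : ℝ, A.mulVec x = μ • x
  · -- dependent case
    obtain ⟨μ, hμ⟩ := hdep
    have hpowx : ∀ j : ℕ, (A ^ j).mulVec x = (μ ^ j) • x := by
      intro j
      induction j with
      | zero => simp [one_mulVec]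
      | succ j ih =>
        rw [pow_succ', ← mulVec_mulVec, ih, mulVec_smul, hμ, smul_smul, pow_succ]
    have hkx : (μ ^ k) • x ∈ interior K := by
      have := hkpos x hx hx0
      rwa [hpowx k] at this
    have hμpos : 0 < μ := by
      rcases lt_trichotomy μ 0 with hlt | heq | hgt
      · exfalso
        have h1 : A.mulVec x ∈ K := hAnn x hx
        rw [hμ] at h1
        have h2 : -(μ • x) ∈ K := by
          rw [← neg_smul]
          exact hKsmul (-μ) (by linarith) x hx
        have := pointed_zero_of_mem_neg hKpt h1 h2
        rw [smul_eq_zero] at this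
        rcases this with h | h
        · linarith
        · exact hx0 h
      · exfalso
        rw [heq, zero_pow hk0.ne', zero_smul] at hkx
        exact h0int hkx
      · exact hgt
    have hxint : x ∈ interior K := by
      have h1 := interior_smul_mem hKsmul (c := (μ ^ k)⁻¹) (by positivity) hkx
      rwa [smul_smul, inv_mul_cancel₀ (by positivity), one_smul] at h1
    have : (A ^ 2).mulVec x = (μ ^ 2) • x := hpowx 2
    rw [this]
    exact interior_smul_mem hKsmul (by positivity) hxint
  · -- independent case
    set y := A.mulVec x with hy
    have hindep : ∀ s t : ℝ, s • x + t • y = 0 → s = 0 ∧ t = 0 := by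
      intro s t hst
      by_cases ht : t = 0
      · subst ht
        rw [zero_smul, add_zero, smul_eq_zero] at hst
        exact ⟨hst.resolve_right hx0, rfl⟩
      · exfalso
        apply hdep
        refine ⟨-s / t, ?_⟩
        have : t • y = -(s • x) := eq_neg_of_add_eq_zero_right hst
        calc y = t⁻¹ • (t • y) := by rw [smul_smul, inv_mul_cancel₀ ht, one_smul]
        _ = t⁻¹ • (-(s • x)) := by rw [this]
        _ = (-s / t) • x := by rw [smul_neg, smul_smul]; rw [← neg_smul]; ring_nf
    -- the 2-dimensional subspace spanned by x and y
    set Ws : Set (Fin n → ℝ) := {z | ∃ s t : ℝ, z = s • x + t • y} with hWs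
    have hxW : x ∈ Ws := ⟨1, 0, by simp⟩
    have hyW : y ∈ Ws := ⟨0, 1, by simp⟩
    have hWadd : ∀ z ∈ Ws, ∀ w ∈ Ws, z + w ∈ Ws := by
      rintro z ⟨s1, t1, rfl⟩ w ⟨s2, t2, rfl⟩
      exact ⟨s1 + s2, t1 + t2, by module⟩
    have hWsmul : ∀ (c : ℝ), ∀ z ∈ Ws, c • z ∈ Ws := by
      rintro c z ⟨s1, t1, rfl⟩
      exact ⟨c * s1, c * t1, by module⟩
    have hWsub : ∀ z ∈ Ws, ∀ w ∈ Ws, z - w ∈ Ws := by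
      rintro z ⟨s1, t1, rfl⟩ w ⟨s2, t2, rfl⟩
      exact ⟨s1 - s2, t1 - t2, by module⟩
    have hWclosed : IsClosed Ws := by
      have hWspan : Ws = ((Submodule.span ℝ {x, y} : Submodule ℝ (Fin n → ℝ)) : Set (Fin n → ℝ)) := by
        ext z
        rw [SetLike.mem_coe, Submodule.mem_span_pair]
        constructor
        · rintro ⟨s, t, rfl⟩; exact ⟨s, t, rfl⟩
        · rintro ⟨s, t, rfl⟩; exact ⟨s, t, rfl⟩
      rw [hWspan]
      exact Submodule.closed_of_finiteDimensional _
    -- the 2-dimensional cone C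
    set C : Set (Fin n → ℝ) := K ∩ Ws with hC
    have hCclosed : IsClosed C := hKcl.inter hWclosed
    have hCadd : ∀ z ∈ C, ∀ w ∈ C, z + w ∈ C := by
      rintro z ⟨hz1, hz2⟩ w ⟨hw1, hw2⟩
      exact ⟨hKadd z hz1 w hw1, hWadd z hz2 w hw2⟩
    have hCsmul : ∀ (c : ℝ), 0 ≤ c → ∀ z ∈ C, c • z ∈ C := by
      rintro c hc z ⟨hz1, hz2⟩
      exact ⟨hKsmul c hc z hz1, hWsmul c z hz2⟩
    have h0C : (0 : Fin n → ℝ) ∈ C := ⟨h0K, 0, 0, by simp⟩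
    have hCconv : Convex ℝ C := by
      intro z hz w hw az bz haz hbz hab
      exact hCadd _ (hCsmul az haz z hz) _ (hCsmul bz hbz w hw)
    have hCx : x ∈ C := ⟨hx, hxW⟩
    have hAC : ∀ z ∈ C, A.mulVec z ∈ C := by
      rintro z ⟨hzK, s, t, rfl⟩
      refine ⟨hAnn _ hzK, t * β, s + t * α, ?_⟩
      have hAy : A.mulVec y = α • y + β • x := by rw [hy]; exact hACT x
      calc A.mulVec (s • x + t • y) = s • A.mulVec x + t • A.mulVec y := by
            rw [mulVec_add, mulVec_smul, mulVec_smul]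
        _ = s • y + t • (α • y + β • x) := by rw [← hy, hAy]
        _ = (t * β) • x + (s + t * α) • y := by module
    have hpowC : ∀ j : ℕ, ∀ z ∈ C, (A ^ j).mulVec z ∈ C := by
      intro j
      induction j with
      | zero => intro z hz; simpa [one_mulVec] using hz
      | succ j ih =>
        intro z hz
        rw [pow_succ', ← mulVec_mulVec]
        exact hAC _ (ih z hz)
    have hCpt : ∀ z ∈ C, -z ∈ C → z = 0 := fun z hz hz' =>
      pointed_zero_of_mem_neg hKpt hz.1 hz'.1
    obtain ⟨g, m, hm, hg0, hglb⟩ := exists_posfun C hCclosed hCsmul hCconv h0C hCpt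
    have hgsmul : ∀ (cc : ℝ) (w : Fin n → ℝ), g (cc • w) = cc * g w := by
      intro cc w
      rw [_root_.map_smul]; simp [smul_eq_mul]
    have hgpos : ∀ w ∈ C, w ≠ 0 → 0 < g w := by
      intro w hw hw0
      have hnw : (0:ℝ) < ‖w‖ := norm_pos_iff.2 hw0
      have := hglb w hw
      nlinarith
    -- the interior point e of K lying in C
    set e : Fin n → ℝ := (A ^ k).mulVec x with he
    have heint : e ∈ interior K := hkpos x hx hx0
    have heC : e ∈ C := hpowC k x hCx
    have he0 : e ≠ 0 := fun h => h0int (h ▸ heint)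
    have hge : 0 < g e := hgpos e heC he0
    -- the direction d of the slice line
    set d : Fin n → ℝ := (g y) • x + (-(g x)) • y with hd
    have hdW : d ∈ Ws := ⟨g y, -(g x), rfl⟩
    have hgd : g d = 0 := by
      rw [hd, map_add, _root_.map_smul, _root_.map_smul]
      simp only [smul_eq_mul]
      ring
    have hgxy : ¬(g x = 0 ∧ g y = 0) := by
      rintro ⟨h1, h2⟩
      obtain ⟨s0, t0, he'⟩ := heC.2
      have : g e = 0 := by
        rw [he', map_add, _root_.map_smul, _root_.map_smul, h1, h2]
        simp
      linarith
    have hd0 : d ≠ 0 := by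
      intro h
      obtain ⟨h1, h2⟩ := hindep _ _ h
      exact hgxy ⟨by linarith [h2], h1⟩
    set p : Fin n → ℝ := (g e)⁻¹ • e with hp
    have hpC : p ∈ C := hCsmul _ (inv_nonneg.2 hge.le) e heC
    have hpW : p ∈ Ws := hpC.2
    have hgp : g p = 1 := by rw [hp, hgsmul, inv_mul_cancel₀ hge.ne']
    -- every point of the slice is on the line p + t d
    have hline : ∀ z ∈ Ws, g z = 1 → ∃ t : ℝ, z = p + t • d := by
      intro z hzW hz1
      obtain ⟨s1, t1, h1⟩ := hWsub z hzW p hpW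
      have hg1 : s1 * g x + t1 * g y = 0 := by
        have h2 : g (z - p) = 0 := by rw [map_sub, hz1, hgp]; ring
        rw [h1, map_add, _root_.map_smul, _root_.map_smul] at h2
        simpa [smul_eq_mul] using h2
      have key : ∀ cc : ℝ, cc • d = s1 • x + t1 • y → z = p + cc • d := by
        intro cc hcc
        rw [hcc, ← h1]
        abel
      by_cases hgx : g x = 0
      · have hgy : g y ≠ 0 := fun h => hgxy ⟨hgx, h⟩
        have ht1 : t1 = 0 := by
          rw [hgx, mul_zero, zero_add] at hg1
          exact (mul_eq_zero.1 hg1).resolve_right hgy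
        refine ⟨s1 / g y, key _ ?_⟩
        rw [hd, smul_add, smul_smul, smul_smul, hgx, ht1]
        rw [div_mul_cancel₀ _ hgy]
        simp
      · refine ⟨-t1 / g x, key _ ?_⟩
        have e1 : (-t1 / g x) * g y = s1 := by
          field_simp
          nlinarith [hg1]
        have e2 : (-t1 / g x) * (-(g x)) = t1 := by
          field_simp
        rw [hd, smul_add, smul_smul, smul_smul, e1, e2]
    -- the slice parameter set T
    set T : Set ℝ := {t : ℝ | p + t • d ∈ C} with hT
    have h0T : (0:ℝ) ∈ T := by
      show p + (0:ℝ) • d ∈ C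
      simpa using hpC
    have hTne : T.Nonempty := ⟨0, h0T⟩
    have hTclosed : IsClosed T := by
      have hcont : Continuous (fun t : ℝ => p + t • d) :=
        continuous_const.add (continuous_id.smul continuous_const)
      exact hCclosed.preimage hcont
    have hdpos : (0:ℝ) < ‖d‖ := norm_pos_iff.2 hd0
    set R : ℝ := (1 / m + ‖p‖) / ‖d‖ with hR
    have hTsub : T ⊆ Icc (-R) R := by
      intro t htT
      have hzC : p + t • d ∈ C := htT
      have hgz : g (p + t • d) = 1 := by
        rw [map_add, hgp, _root_.map_smul, hgd]
        simp
      have hnz : m * ‖p + t • d‖ ≤ 1 := by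
        have := hglb _ hzC
        rwa [hgz] at this
      have h2 : ‖p + t • d‖ ≤ 1 / m := by
        rw [le_div_iff₀ hm, mul_comm]
        exact hnz
      have h3 : ‖t • d‖ ≤ 1 / m + ‖p‖ := by
        have h4 : t • d = (p + t • d) - p := by abel
        rw [h4]
        calc ‖(p + t • d) - p‖ ≤ ‖p + t • d‖ + ‖p‖ := norm_sub_le _ _
          _ ≤ 1 / m + ‖p‖ := by linarith
      have h4 : |t| * ‖d‖ ≤ 1 / m + ‖p‖ := by
        rwa [norm_smul, Real.norm_eq_abs] at h3
      have h5 : |t| ≤ R := by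
        rw [hR, le_div_iff₀ hdpos]
        exact h4
      exact abs_le.1 h5
    have hTcpt : IsCompact T := isCompact_Icc.of_isClosed_subset hTclosed hTsub
    set r1 : ℝ := sInf T with hr1
    set r2 : ℝ := sSup T with hr2
    have hr1T : r1 ∈ T := hTcpt.sInf_mem hTne
    have hr2T : r2 ∈ T := hTcpt.sSup_mem hTne
    have hr1le : ∀ t ∈ T, r1 ≤ t := fun t ht => csInf_le hTcpt.bddBelow ht
    have hr2ge : ∀ t ∈ T, t ≤ r2 := fun t ht => le_csSup hTcpt.bddAbove ht
    set u : Fin n → ℝ := p + r1 • d with hu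
    set v : Fin n → ℝ := p + r2 • d with hv
    have huC : u ∈ C := hr1T
    have hvC : v ∈ C := hr2T
    have hgu : g u = 1 := by rw [hu, map_add, hgp, _root_.map_smul, hgd]; simp
    have hgv : g v = 1 := by rw [hv, map_add, hgp, _root_.map_smul, hgd]; simp
    -- perturbation of interior points along d
    have hperturb : ∀ w ∈ interior K, ∃ ε : ℝ, 0 < ε ∧ w + ε • d ∈ K ∧ w - ε • d ∈ K := by
      intro w hw
      rw [mem_interior_iff_mem_nhds, Metric.mem_nhds_iff] at hw
      obtain ⟨ε0, hε0, hball⟩ := hw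
      have hεd : ‖(ε0 / (2 * ‖d‖)) • d‖ < ε0 := by
        rw [norm_smul, Real.norm_eq_abs, abs_of_pos (by positivity)]
        rw [div_mul_eq_mul_div, mul_comm]
        rw [div_lt_iff₀ (by positivity)]
        nlinarith [hdpos, hε0]
      refine ⟨ε0 / (2 * ‖d‖), by positivity, ?_, ?_⟩
      · apply hball
        rw [Metric.mem_ball, dist_eq_norm, add_sub_cancel_left]
        exact hεd
      · apply hball
        rw [Metric.mem_ball, dist_eq_norm, sub_sub_cancel_left, norm_neg]
        exact hεd
    -- the endpoints are distinct
    have hr12 : r1 < r2 := by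
      by_contra hcon
      push_neg at hcon
      have hTsing : ∀ t ∈ T, t = r1 := fun t ht =>
        le_antisymm (le_trans (hr2ge t ht) hcon) (hr1le t ht)
      have hr10 : r1 = 0 := ((hTsing 0 h0T)).symm
      obtain ⟨ε, hε, hK1, _⟩ := hperturb e heint
      have hmemC : (g e)⁻¹ • (e + ε • d) ∈ C :=
        hCsmul _ (inv_nonneg.2 hge.le) _ ⟨hK1, hWadd e heC.2 _ (hWsmul ε d hdW)⟩
      have hrw : (g e)⁻¹ • (e + ε • d) = p + ((g e)⁻¹ * ε) • d := by
        rw [smul_add, hp, smul_smul]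
      rw [hrw] at hmemC
      have ht' : (g e)⁻¹ * ε ∈ T := hmemC
      have := hTsing _ ht'
      rw [hr10] at this
      nlinarith [inv_pos.2 hge]
    have hruv : r2 - r1 ≠ 0 := ne_of_gt (by linarith)
    -- representation of elements of C in terms of u and v
    have hrep : ∀ z ∈ C, ∃ aa bb : ℝ, 0 ≤ aa ∧ 0 ≤ bb ∧ z = aa • u + bb • v := by
      intro z hz
      by_cases hz0 : z = 0
      · exact ⟨0, 0, le_rfl, le_rfl, by rw [hz0]; simp⟩
      · have hgz : 0 < g z := hgpos z hz hz0
        have hz' : (g z)⁻¹ • z ∈ C := hCsmul _ (inv_nonneg.2 hgz.le) z hz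
        have hgz' : g ((g z)⁻¹ • z) = 1 := by rw [hgsmul, inv_mul_cancel₀ hgz.ne']
        obtain ⟨t, ht⟩ := hline _ hz'.2 hgz'
        have htT : t ∈ T := by
          show p + t • d ∈ C
          rw [← ht]; exact hz'
        have h1 : r1 ≤ t := hr1le t htT
        have h2 : t ≤ r2 := hr2ge t htT
        set θ : ℝ := (r2 - t) / (r2 - r1) with hθ
        have hθ0 : 0 ≤ θ := div_nonneg (by linarith) (by linarith)
        have hθ1 : θ ≤ 1 := by
          rw [hθ, div_le_one (by linarith)]
          linarith
        have hco : θ * r1 + (1 - θ) * r2 = t := by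
          rw [hθ]
          field_simp
          ring
        refine ⟨g z * θ, g z * (1 - θ), mul_nonneg hgz.le hθ0,
          mul_nonneg hgz.le (by linarith), ?_⟩
        calc z = g z • ((g z)⁻¹ • z) := by
              rw [smul_smul, mul_inv_cancel₀ hgz.ne', one_smul]
          _ = g z • (p + t • d) := by rw [← ht]
          _ = (g z * θ) • u + (g z * (1 - θ)) • v := by
              rw [hu, hv]
              rw [← hco]
              module
    -- linear independence of u and v
    have huvindep : ∀ aa bb : ℝ, aa • u + bb • v = 0 → aa = 0 ∧ bb = 0 := by
      intro aa bb h
      have h1 : aa + bb = 0 := by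
        have h2 : g (aa • u + bb • v) = g 0 := congrArg (fun z => g z) h
        rw [map_add, _root_.map_smul, _root_.map_smul, hgu, hgv, map_zero, smul_eq_mul,
          smul_eq_mul, mul_one, mul_one] at h2
        exact h2
      have h2 : (aa * r1 + bb * r2) • d = 0 := by
        have h3 : aa • u + bb • v = (aa + bb) • p + (aa * r1 + bb * r2) • d := by
          rw [hu, hv]; module
        rw [h3, h1, zero_smul, zero_add] at h
        exact h
      have h3 : aa * r1 + bb * r2 = 0 := (smul_eq_zero.1 h2).resolve_right hd0
      have h4 : aa * (r1 - r2) = 0 := by linear_combination h3 - r2 * h1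
      have haa : aa = 0 := (mul_eq_zero.1 h4).resolve_right (by intro h5; apply hruv; linarith)
      exact ⟨haa, by linarith⟩
    have hcoord : ∀ a1 b1 a2 b2 : ℝ, a1 • u + b1 • v = a2 • u + b2 • v → a1 = a2 ∧ b1 = b2 := by
      intro a1 b1 a2 b2 h
      have h1 : (a1 - a2) • u + (b1 - b2) • v = 0 := by
        have : (a1 - a2) • u + (b1 - b2) • v = (a1 • u + b1 • v) - (a2 • u + b2 • v) := by
          module
        rw [this, h, sub_self]
      obtain ⟨h2, h3⟩ := huvindep _ _ h1
      constructor <;> linarith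
    -- u and v are not interior points of K
    have hu_not : u ∉ interior K := by
      intro hu_int
      obtain ⟨ε, hε, _, hK2⟩ := hperturb u hu_int
      have hmem : u - ε • d ∈ C := ⟨hK2, hWsub u huC.2 _ (hWsmul ε d hdW)⟩
      have heq2 : u - ε • d = p + (r1 - ε) • d := by rw [hu]; module
      have htT : r1 - ε ∈ T := by
        show p + (r1 - ε) • d ∈ C
        rw [← heq2]; exact hmem
      linarith [hr1le _ htT]
    have hv_not : v ∉ interior K := by
      intro hv_int
      obtain ⟨ε, hε, hK1, _⟩ := hperturb v hv_int
      have hmem : v + ε • d ∈ C := ⟨hK1, hWadd v hvC.2 _ (hWsmul ε d hdW)⟩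
      have heq2 : v + ε • d = p + (r2 + ε) • d := by rw [hv]; module
      have htT : r2 + ε ∈ T := by
        show p + (r2 + ε) • d ∈ C
        rw [← heq2]; exact hmem
      linarith [hr2ge _ htT]
    -- coordinates of interior points are strictly positive
    have hposcoord : ∀ w : Fin n → ℝ, w ∈ interior K → ∀ aa bb : ℝ, 0 ≤ aa → 0 ≤ bb →
        w = aa • u + bb • v → 0 < aa ∧ 0 < bb := by
      intro w hw aa bb ha hb heq2
      have hw0 : w ≠ 0 := fun h => h0int (h ▸ hw)
      constructor
      · rcases eq_or_lt_of_le ha with h | h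
        · exfalso
          rw [← h, zero_smul, zero_add] at heq2
          have hbb : bb ≠ 0 := by
            intro h5
            rw [h5, zero_smul] at heq2
            exact hw0 heq2
          have hbbpos : 0 < bb := lt_of_le_of_ne hb (Ne.symm hbb)
          have : v = bb⁻¹ • w := by
            rw [heq2, smul_smul, inv_mul_cancel₀ hbb, one_smul]
          rw [this] at hv_not
          exact hv_not (interior_smul_mem hKsmul (inv_pos.2 hbbpos) hw)
        · exact h
      · rcases eq_or_lt_of_le hb with h | h
        · exfalso
          rw [← h, zero_smul, add_zero] at heq2
          have haa : aa ≠ 0 := by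
            intro h5
            rw [h5, zero_smul] at heq2
            exact hw0 heq2
          have haapos : 0 < aa := lt_of_le_of_ne ha (Ne.symm haa)
          have : u = aa⁻¹ • w := by
            rw [heq2, smul_smul, inv_mul_cancel₀ haa, one_smul]
          rw [this] at hu_not
          exact hu_not (interior_smul_mem hKsmul (inv_pos.2 haapos) hw)
        · exact h
    -- positive combinations of u and v are interior points of K
    have hintC : ∀ P Q : ℝ, 0 < P → 0 < Q → P • u + Q • v ∈ interior K := by
      obtain ⟨g0, h0', hg0', hh0', he'⟩ := hrep e heC
      intro P Q hP hQ
      set ε1 : ℝ := min (P / (g0 + 1)) (Q / (h0' + 1)) with hε1def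
      have hε1 : 0 < ε1 := lt_min (by positivity) (by positivity)
      have hc1 : 0 ≤ P - ε1 * g0 := by
        have h1 : ε1 ≤ P / (g0 + 1) := min_le_left _ _
        have h2 := mul_le_mul_of_nonneg_right h1 hg0'
        have h3 : P / (g0 + 1) * g0 ≤ P := by
          rw [div_mul_eq_mul_div, div_le_iff₀ (by positivity)]
          nlinarith
        linarith
      have hc2 : 0 ≤ Q - ε1 * h0' := by
        have h1 : ε1 ≤ Q / (h0' + 1) := min_le_right _ _
        have h2 := mul_le_mul_of_nonneg_right h1 hh0'
        have h3 : Q / (h0' + 1) * h0' ≤ Q := by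
          rw [div_mul_eq_mul_div, div_le_iff₀ (by positivity)]
          nlinarith
        linarith
      have hsplit : P • u + Q • v = ε1 • e + ((P - ε1 * g0) • u + (Q - ε1 * h0') • v) := by
        rw [he']
        module
      rw [hsplit]
      exact interior_add_mem hKadd (interior_smul_mem hKsmul hε1 heint)
        (hKadd _ (hKsmul _ hc1 u huC.1) _ (hKsmul _ hc2 v hvC.1))
    -- the matrix of A in the "basis" u, v of the cone C
    obtain ⟨a1, c1, ha1, hc1, hAu⟩ := hrep _ (hAC u huC)
    obtain ⟨b1, d1, hb1, hd1, hAv⟩ := hrep _ (hAC v hvC)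
    have hu0 : u ≠ 0 := by
      intro h
      have := huvindep 1 0 (by rw [h]; simp)
      exact one_ne_zero this.1
    have hv0 : v ≠ 0 := by
      intro h
      have := huvindep 0 1 (by rw [h]; simp)
      exact one_ne_zero this.2
    have hposk : ∀ w ∈ C, w ≠ 0 → ∃ gq hq : ℝ, 0 < gq ∧ 0 < hq ∧
        (A ^ k).mulVec w = gq • u + hq • v := by
      intro w hw hw0
      obtain ⟨gq, hq, h1, h2, h3⟩ := hrep _ (hpowC k w hw)
      obtain ⟨h4, h5⟩ := hposcoord _ (hkpos w hw.1 hw0) gq hq h1 h2 h3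
      exact ⟨gq, hq, h4, h5, h3⟩
    -- Wielandt-type argument: b1 > 0
    have hbpos : 0 < b1 := by
      rcases eq_or_lt_of_le hb1 with hb | hb
      · exfalso
        have hAvj : ∀ j : ℕ, (A ^ j).mulVec v = (d1 ^ j) • v := by
          intro j
          induction j with
          | zero => simp [one_mulVec]
          | succ j ih =>
            rw [pow_succ', ← mulVec_mulVec, ih, mulVec_smul, hAv, ← hb, zero_smul,
              zero_add, smul_smul, ← pow_succ]
        obtain ⟨gq, hq, hgq, hhq, heq2⟩ := hposk v hvC hv0
        rw [hAvj k] at heq2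
        have h5 : (0:ℝ) = gq ∧ d1 ^ k = hq := by
          apply hcoord
          rw [zero_smul, zero_add]
          exact heq2
        linarith [h5.1, hgq]
      · exact hb
    have hcpos : 0 < c1 := by
      rcases eq_or_lt_of_le hc1 with hc | hc
      · exfalso
        have hAuj : ∀ j : ℕ, (A ^ j).mulVec u = (a1 ^ j) • u := by
          intro j
          induction j with
          | zero => simp [one_mulVec]
          | succ j ih =>
            rw [pow_succ', ← mulVec_mulVec, ih, mulVec_smul, hAu, ← hc, zero_smul,
              add_zero, smul_smul, ← pow_succ]
        obtain ⟨gq, hq, hgq, hhq, heq2⟩ := hposk u huC hu0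
        rw [hAuj k] at heq2
        have h5 : a1 ^ k = gq ∧ (0:ℝ) = hq := by
          apply hcoord
          rw [zero_smul, add_zero]
          exact heq2
        linarith [h5.2, hhq]
      · exact hc
    have htr : 0 < a1 + d1 := by
      by_contra hcon
      push_neg at hcon
      have haz : a1 = 0 := le_antisymm (by linarith) ha1
      have hdz : d1 = 0 := le_antisymm (by linarith) hd1
      have hAu' : A.mulVec u = c1 • v := by rw [hAu, haz, zero_smul, zero_add]
      have hAv' : A.mulVec v = b1 • u := by rw [hAv, hdz, zero_smul, add_zero]
      have hjj : ∀ j : ℕ, (A ^ (2 * j)).mulVec u = ((c1 * b1) ^ j) • u ∧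
          (A ^ (2 * j + 1)).mulVec u = (((c1 * b1) ^ j) * c1) • v := by
        intro j
        induction j with
        | zero =>
          constructor
          · norm_num [one_mulVec]
          · norm_num [hAu']
        | succ j ih =>
          have hfirst : (A ^ (2 * (j + 1))).mulVec u = ((c1 * b1) ^ (j + 1)) • u := by
            rw [show 2 * (j + 1) = (2 * j + 1) + 1 by ring, pow_succ', ← mulVec_mulVec, ih.2,
              mulVec_smul, hAv', smul_smul, pow_succ]
            congr 1
            ring
          refine ⟨hfirst, ?_⟩
          rw [show 2 * (j + 1) + 1 = (2 * (j + 1)) + 1 by ring, pow_succ', ← mulVec_mulVec,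
            hfirst, mulVec_smul, hAu', smul_smul]
      obtain ⟨gq, hq, hgq, hhq, heq2⟩ := hposk u huC hu0
      rcases Nat.even_or_odd k with ⟨j, hj⟩ | ⟨j, hj⟩
      · have h5 : (A ^ (2 * j)).mulVec u = ((c1 * b1) ^ j) • u := (hjj j).1
        rw [show 2 * j = k by omega] at h5
        rw [h5] at heq2
        have h6 : (c1 * b1) ^ j = gq ∧ (0:ℝ) = hq := by
          apply hcoord
          rw [zero_smul, add_zero]
          exact heq2
        linarith [h6.2, hhq]
      · have h5 : (A ^ (2 * j + 1)).mulVec u = (((c1 * b1) ^ j) * c1) • v := (hjj j).2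
        rw [show 2 * j + 1 = k by omega] at h5
        rw [h5] at heq2
        have h6 : (0:ℝ) = gq ∧ ((c1 * b1) ^ j) * c1 = hq := by
          apply hcoord
          rw [zero_smul, zero_add]
          exact heq2
        linarith [h6.1, hgq]
    -- conclusion
    obtain ⟨s, t, hs0, ht0, hxuv⟩ := hrep x hCx
    have hstpos : 0 < s + t := by
      rcases lt_or_ge 0 (s + t) with h | h
      · exact h
      · exfalso
        have hs : s = 0 := le_antisymm (by linarith) hs0
        have ht : t = 0 := le_antisymm (by linarith) ht0
        rw [hs, ht, zero_smul, zero_add, zero_smul] at hxuv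
        exact hx0 hxuv
    have hAxc : A.mulVec x = (s * a1 + t * b1) • u + (s * c1 + t * d1) • v := by
      calc A.mulVec x = A.mulVec (s • u + t • v) := by rw [← hxuv]
        _ = s • A.mulVec u + t • A.mulVec v := by
            rw [mulVec_add, mulVec_smul, mulVec_smul]
        _ = s • (a1 • u + c1 • v) + t • (b1 • u + d1 • v) := by rw [hAu, hAv]
        _ = (s * a1 + t * b1) • u + (s * c1 + t * d1) • v := by module
    have hA2x : (A ^ 2).mulVec x =
        ((s * a1 + t * b1) * a1 + (s * c1 + t * d1) * b1) • u +
        ((s * a1 + t * b1) * c1 + (s * c1 + t * d1) * d1) • v := by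
      rw [pow_two, ← mulVec_mulVec, hAxc]
      calc A.mulVec ((s * a1 + t * b1) • u + (s * c1 + t * d1) • v)
          = (s * a1 + t * b1) • A.mulVec u + (s * c1 + t * d1) • A.mulVec v := by
            rw [mulVec_add, mulVec_smul, mulVec_smul]
        _ = (s * a1 + t * b1) • (a1 • u + c1 • v) + (s * c1 + t * d1) • (b1 • u + d1 • v) := by
            rw [hAu, hAv]
        _ = ((s * a1 + t * b1) * a1 + (s * c1 + t * d1) * b1) • u +
            ((s * a1 + t * b1) * c1 + (s * c1 + t * d1) * d1) • v := by module
    have hP : 0 < (s * a1 + t * b1) * a1 + (s * c1 + t * d1) * b1 := by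
      rcases lt_or_ge 0 s with hs | hs
      · nlinarith [mul_pos hs (mul_pos hcpos hbpos), mul_nonneg hs.le (sq_nonneg a1),
          mul_nonneg ht0 (mul_nonneg hbpos.le htr.le), mul_nonneg ht0 (mul_nonneg ha1 hbpos.le),
          mul_nonneg ht0 (mul_nonneg hbpos.le hd1)]
      · have hs' : s = 0 := le_antisymm hs hs0
        have ht' : 0 < t := by linarith
        rw [hs']
        nlinarith [mul_pos ht' (mul_pos hbpos htr)]
    have hQ : 0 < (s * a1 + t * b1) * c1 + (s * c1 + t * d1) * d1 := by
      rcases lt_or_ge 0 s with hs | hs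
      · nlinarith [mul_pos hs (mul_pos hcpos htr), mul_nonneg ht0 (mul_nonneg hbpos.le hcpos.le),
          mul_nonneg ht0 (sq_nonneg d1)]
      · have hs' : s = 0 := le_antisymm hs hs0
        have ht' : 0 < t := by linarith
        rw [hs']
        nlinarith [mul_pos ht' (mul_pos hbpos hcpos), mul_nonneg ht'.le (sq_nonneg d1)]
    rw [hA2x]
    exact hintC _ _ hP hQ


end AuxiliaryLemmas
/-- If `A` is `K`-primitive and the degree of its minimal polynomial is `2`,
then `γ(A) = 1` or `γ(A) = 2`. -/

theorem stmt_1 {n : ℕ} (K : Set (Fin n → ℝ)) (A : Matrix (Fin n) (Fin n) ℝ)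
    (hK : IsProperCone K) (hA : KPrimitive K A) (hdeg : (minpoly ℝ A).natDegree = 2) :
    expnt K A = 1 ∨ expnt K A = 2 := by
  have h2 : KPositive K (A ^ 2) := KPositive_sq K A hK hA hdeg
  have hmem2 : 2 ∈ {k : ℕ | 0 < k ∧ KPositive K (A ^ k)} := ⟨two_pos, h2⟩
  have hle : sInf {k : ℕ | 0 < k ∧ KPositive K (A ^ k)} ≤ 2 := Nat.sInf_le hmem2
  have hmem : sInf {k : ℕ | 0 < k ∧ KPositive K (A ^ k)} ∈
      {k : ℕ | 0 < k ∧ KPositive K (A ^ k)} := Nat.sInf_mem ⟨2, hmem2⟩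
  have h1 : 0 < sInf {k : ℕ | 0 < k ∧ KPositive K (A ^ k)} := hmem.1
  unfold expnt
  omega
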